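/- arXiv:1808.05510 — 3 statements merged into one kernel-verified Lean document; each statement's English description precedes it below -/
import Mathlib

section
/- Assume Ω has all entries in {0,1}, L_x and L_y are symmetric, and λ ≥ 0. A real n_Y×n_X matrix W is a global minimizer of J(W) = (1/2)‖Ω ∘ (W X − Y)‖_F² + (λ/2)‖L_y W + W L_x‖_F² if and only if 𝒜(W) = D, where D = (Ω ∘ Y) Xᵀ. -/
open Matrix

/-- Squared Frobenius norm: `‖M‖_F² = trace (Mᵀ M)`. -/
noncomputable def frobSq {m n : ℕ} (M : Matrix (Fin m) (Fin n) ℝ) : ℝ :=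
  Matrix.trace (Mᵀ * M)

/-- The operator `𝒜(W) = λ(W L_x² + 2 L_y W L_x + L_y² W) + Σ_α diag(Ω_α) W X_α X_αᵀ`. -/
noncomputable def opA {nY nX ninj : ℕ} (lam : ℝ)
    (Lx : Matrix (Fin nX) (Fin nX) ℝ) (Ly : Matrix (Fin nY) (Fin nY) ℝ)
    (X : Matrix (Fin nX) (Fin ninj) ℝ) (Om : Matrix (Fin nY) (Fin ninj) ℝ)
    (W : Matrix (Fin nY) (Fin nX) ℝ) : Matrix (Fin nY) (Fin nX) ℝ :=
  lam • (W * Lx ^ 2 + (2 : ℝ) • (Ly * W * Lx) + Ly ^ 2 * W) +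
    ∑ α : Fin ninj,
      Matrix.diagonal (fun i => Om i α) * W *
        Matrix.vecMulVec (fun k => X k α) (fun k => X k α)

/-- The objective `J(W) = (1/2)‖Ω ∘ (W X − Y)‖_F² + (λ/2)‖L_y W + W L_x‖_F²`. -/
noncomputable def Jobj {nY nX ninj : ℕ} (lam : ℝ)
    (Lx : Matrix (Fin nX) (Fin nX) ℝ) (Ly : Matrix (Fin nY) (Fin nY) ℝ)
    (X : Matrix (Fin nX) (Fin ninj) ℝ) (Y Om : Matrix (Fin nY) (Fin ninj) ℝ)
    (W : Matrix (Fin nY) (Fin nX) ℝ) : ℝ :=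
  (1 / 2) * frobSq (Om ⊙ (W * X - Y)) + (lam / 2) * frobSq (Ly * W + W * Lx)

namespace MinAux

/-- Frobenius inner product. -/
noncomputable def ip {m n : ℕ} (A B : Matrix (Fin m) (Fin n) ℝ) : ℝ :=
  Matrix.trace (Aᵀ * B)

variable {m n p : ℕ}

lemma ip_eq_sum (A B : Matrix (Fin m) (Fin n) ℝ) :
    ip A B = ∑ j, ∑ i, A i j * B i j := by
  simp [ip, Matrix.trace, Matrix.mul_apply, Matrix.diag]

lemma frobSq_eq_ip (A : Matrix (Fin m) (Fin n) ℝ) : frobSq A = ip A A := rfl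

lemma ip_comm (A B : Matrix (Fin m) (Fin n) ℝ) : ip A B = ip B A := by
  simp [ip_eq_sum, mul_comm]

lemma ip_add_left (A B C : Matrix (Fin m) (Fin n) ℝ) :
    ip (A + B) C = ip A C + ip B C := by
  simp [ip_eq_sum, add_mul, Finset.sum_add_distrib]

lemma ip_add_right (A B C : Matrix (Fin m) (Fin n) ℝ) :
    ip A (B + C) = ip A B + ip A C := by
  simp [ip_eq_sum, mul_add, Finset.sum_add_distrib]

lemma ip_smul_left (t : ℝ) (A B : Matrix (Fin m) (Fin n) ℝ) :
    ip (t • A) B = t * ip A B := by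
  simp [ip_eq_sum, Finset.mul_sum, mul_assoc]

lemma ip_smul_right (t : ℝ) (A B : Matrix (Fin m) (Fin n) ℝ) :
    ip A (t • B) = t * ip A B := by
  simp only [ip_eq_sum, Matrix.smul_apply, smul_eq_mul, Finset.mul_sum]
  refine Finset.sum_congr rfl fun j _ => Finset.sum_congr rfl fun i _ => by ring

lemma ip_zero_left (B : Matrix (Fin m) (Fin n) ℝ) : ip 0 B = 0 := by
  simp [ip_eq_sum]

lemma frobSq_add (A B : Matrix (Fin m) (Fin n) ℝ) :
    frobSq (A + B) = frobSq A + 2 * ip A B + frobSq B := by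
  simp only [frobSq_eq_ip, ip_add_left, ip_add_right, ip_comm B A]; ring

lemma frobSq_nonneg (A : Matrix (Fin m) (Fin n) ℝ) : 0 ≤ frobSq A := by
  rw [frobSq_eq_ip, ip_eq_sum]
  exact Finset.sum_nonneg fun j _ => Finset.sum_nonneg fun i _ => mul_self_nonneg _

lemma frobSq_smul (t : ℝ) (A : Matrix (Fin m) (Fin n) ℝ) :
    frobSq (t • A) = t ^ 2 * frobSq A := by
  simp [frobSq_eq_ip, ip_smul_left, ip_smul_right]; ring

lemma eq_zero_of_frobSq_nonpos (A : Matrix (Fin m) (Fin n) ℝ)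
    (h : frobSq A ≤ 0) : A = 0 := by
  have h0 : frobSq A = 0 := le_antisymm h (frobSq_nonneg A)
  rw [frobSq_eq_ip, ip_eq_sum] at h0
  ext i j
  have h1 : ∀ j ∈ Finset.univ, (∑ i, A i j * A i j) = 0 := by
    rw [← Finset.sum_eq_zero_iff_of_nonneg]
    · exact h0
    · intro j _; exact Finset.sum_nonneg fun i _ => mul_self_nonneg _
  have h2 := h1 j (Finset.mem_univ j)
  have h3 : ∀ i ∈ Finset.univ, A i j * A i j = 0 := by
    rw [← Finset.sum_eq_zero_iff_of_nonneg]
    · exact h2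
    · intro i _; exact mul_self_nonneg _
  have := h3 i (Finset.mem_univ i)
  simpa [mul_self_eq_zero] using this

lemma ip_mul_right (A : Matrix (Fin m) (Fin n) ℝ) (V : Matrix (Fin m) (Fin p) ℝ)
    (X : Matrix (Fin p) (Fin n) ℝ) : ip A (V * X) = ip (A * Xᵀ) V := by
  unfold ip
  rw [transpose_mul, transpose_transpose]
  calc (Aᵀ * (V * X)).trace = ((Aᵀ * V) * X).trace := by rw [Matrix.mul_assoc]
    _ = (X * (Aᵀ * V)).trace := Matrix.trace_mul_comm _ _
    _ = ((X * Aᵀ) * V).trace := by rw [Matrix.mul_assoc]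

lemma ip_lmul_right (A V : Matrix (Fin m) (Fin n) ℝ) (L : Matrix (Fin m) (Fin m) ℝ) :
    ip A (L * V) = ip (Lᵀ * A) V := by
  unfold ip
  rw [transpose_mul, transpose_transpose, Matrix.mul_assoc]

lemma ip_rmul_right (A V : Matrix (Fin m) (Fin n) ℝ) (L : Matrix (Fin n) (Fin n) ℝ) :
    ip A (V * L) = ip (A * Lᵀ) V := by
  unfold ip
  rw [transpose_mul, transpose_transpose]
  calc (Aᵀ * (V * L)).trace = ((Aᵀ * V) * L).trace := by rw [Matrix.mul_assoc]
    _ = (L * (Aᵀ * V)).trace := Matrix.trace_mul_comm _ _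
    _ = ((L * Aᵀ) * V).trace := by rw [Matrix.mul_assoc]

lemma ip_had_had {q : ℕ} (Om : Matrix (Fin m) (Fin q) ℝ)
    (hOm : ∀ i j, Om i j = 0 ∨ Om i j = 1) (A B : Matrix (Fin m) (Fin q) ℝ) :
    ip (Om ⊙ A) (Om ⊙ B) = ip (Om ⊙ A) B := by
  simp only [ip_eq_sum, Matrix.hadamard_apply]
  refine Finset.sum_congr rfl fun j _ => Finset.sum_congr rfl fun i _ => ?_
  rcases hOm i j with h | h <;> simp [h]

variable {nY nX ninj : ℕ}

lemma sum_diag_eq (Om : Matrix (Fin nY) (Fin ninj) ℝ) (X : Matrix (Fin nX) (Fin ninj) ℝ)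
    (W : Matrix (Fin nY) (Fin nX) ℝ) :
    (∑ α : Fin ninj,
      Matrix.diagonal (fun i => Om i α) * W *
        Matrix.vecMulVec (fun k => X k α) (fun k => X k α)) = (Om ⊙ (W * X)) * Xᵀ := by
  ext i j
  simp only [Matrix.sum_apply, Matrix.mul_apply, Matrix.vecMulVec_apply,
    Matrix.hadamard_apply, Matrix.transpose_apply, Matrix.diagonal_apply,
    Finset.sum_mul, Finset.mul_sum]
  refine Finset.sum_congr rfl fun α _ => Finset.sum_congr rfl fun k _ => ?_
  rw [Finset.sum_eq_single i]
  · simp; ring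
  · intro b _ hb; simp [Ne.symm hb]
  · intro h; exact absurd (Finset.mem_univ i) h

lemma opA_eq (lam : ℝ) (Lx : Matrix (Fin nX) (Fin nX) ℝ) (Ly : Matrix (Fin nY) (Fin nY) ℝ)
    (X : Matrix (Fin nX) (Fin ninj) ℝ) (Om : Matrix (Fin nY) (Fin ninj) ℝ)
    (W : Matrix (Fin nY) (Fin nX) ℝ) :
    opA lam Lx Ly X Om W =
      lam • (W * Lx ^ 2 + (2 : ℝ) • (Ly * W * Lx) + Ly ^ 2 * W) + (Om ⊙ (W * X)) * Xᵀ := by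
  rw [opA, sum_diag_eq]

/-- The gradient identity. -/
lemma grad_eq (lam : ℝ)
    (Lx : Matrix (Fin nX) (Fin nX) ℝ) (hLx : Lxᵀ = Lx)
    (Ly : Matrix (Fin nY) (Fin nY) ℝ) (hLy : Lyᵀ = Ly)
    (X : Matrix (Fin nX) (Fin ninj) ℝ) (Y Om : Matrix (Fin nY) (Fin ninj) ℝ)
    (hOm : ∀ i j, Om i j = 0 ∨ Om i j = 1)
    (W V : Matrix (Fin nY) (Fin nX) ℝ) :
    ip (Om ⊙ (W * X - Y)) (Om ⊙ (V * X)) +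
        lam * ip (Ly * W + W * Lx) (Ly * V + V * Lx) =
      ip (opA lam Lx Ly X Om W - (Om ⊙ Y) * Xᵀ) V := by
  rw [ip_had_had Om hOm, ip_mul_right, ip_add_right, ip_lmul_right, ip_rmul_right, hLy, hLx]
  rw [show lam * (ip (Ly * (Ly * W + W * Lx)) V + ip ((Ly * W + W * Lx) * Lx) V)
      = ip (lam • (Ly * (Ly * W + W * Lx) + (Ly * W + W * Lx) * Lx)) V by
    rw [ip_smul_left, ip_add_left]]
  rw [← ip_add_left]
  congr 1
  rw [opA_eq]
  have h1 : Om ⊙ (W * X - Y) = Om ⊙ (W * X) - Om ⊙ Y := by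
    ext i j; simp [Matrix.hadamard_apply, Matrix.sub_apply]; ring
  rw [h1, Matrix.sub_mul]
  have h2 : Ly * (Ly * W + W * Lx) + (Ly * W + W * Lx) * Lx
      = W * Lx ^ 2 + (2 : ℝ) • (Ly * W * Lx) + Ly ^ 2 * W := by
    rw [Matrix.mul_add, Matrix.add_mul, pow_two, pow_two]
    rw [show ((2 : ℝ) • (Ly * W * Lx)) = Ly * W * Lx + Ly * W * Lx by
      rw [two_smul]]
    rw [← Matrix.mul_assoc, ← Matrix.mul_assoc, Matrix.mul_assoc W Lx Lx]
    abel
  rw [h2]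
  abel

/-- Second-order expansion of the objective. -/
lemma J_expand (lam : ℝ)
    (Lx : Matrix (Fin nX) (Fin nX) ℝ) (hLx : Lxᵀ = Lx)
    (Ly : Matrix (Fin nY) (Fin nY) ℝ) (hLy : Lyᵀ = Ly)
    (X : Matrix (Fin nX) (Fin ninj) ℝ) (Y Om : Matrix (Fin nY) (Fin ninj) ℝ)
    (hOm : ∀ i j, Om i j = 0 ∨ Om i j = 1)
    (W V : Matrix (Fin nY) (Fin nX) ℝ) :
    Jobj lam Lx Ly X Y Om (W + V) =
      Jobj lam Lx Ly X Y Om W + ip (opA lam Lx Ly X Om W - (Om ⊙ Y) * Xᵀ) V +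
        (1 / 2) * frobSq (Om ⊙ (V * X)) + (lam / 2) * frobSq (Ly * V + V * Lx) := by
  have h1 : Om ⊙ ((W + V) * X - Y) = Om ⊙ (W * X - Y) + Om ⊙ (V * X) := by
    rw [← Matrix.hadamard_add]
    congr 1
    rw [Matrix.add_mul]
    abel
  have h2 : Ly * (W + V) + (W + V) * Lx = (Ly * W + W * Lx) + (Ly * V + V * Lx) := by
    rw [Matrix.mul_add, Matrix.add_mul]
    abel
  rw [Jobj, Jobj, h1, h2, frobSq_add, frobSq_add,
    ← grad_eq lam Lx hLx Ly hLy X Y Om hOm W V]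
  ring

end MinAux

open MinAux

/-- `W` is a global minimizer of `J` iff `𝒜(W) = D` where `D = (Ω ∘ Y) Xᵀ`. -/
theorem minimizer_iff_normal_equations {nY nX ninj : ℕ} (lam : ℝ) (hlam : 0 ≤ lam)
    (Lx : Matrix (Fin nX) (Fin nX) ℝ) (hLx : Lxᵀ = Lx)
    (Ly : Matrix (Fin nY) (Fin nY) ℝ) (hLy : Lyᵀ = Ly)
    (X : Matrix (Fin nX) (Fin ninj) ℝ) (Y Om : Matrix (Fin nY) (Fin ninj) ℝ)
    (hOm : ∀ i j, Om i j = 0 ∨ Om i j = 1)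
    (W : Matrix (Fin nY) (Fin nX) ℝ) :
    (∀ W' : Matrix (Fin nY) (Fin nX) ℝ,
        Jobj lam Lx Ly X Y Om W ≤ Jobj lam Lx Ly X Y Om W') ↔
      opA lam Lx Ly X Om W = (Om ⊙ Y) * Xᵀ := by
  set G := opA lam Lx Ly X Om W - (Om ⊙ Y) * Xᵀ with hG
  constructor
  · intro hmin
    have key : ∀ t : ℝ, 0 < t → ip G G ≤ t *
        ((1 / 2) * frobSq (Om ⊙ (G * X)) + (lam / 2) * frobSq (Ly * G + G * Lx)) := by
      intro t ht
      have h := hmin (W + (-t) • G)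
      rw [J_expand lam Lx hLx Ly hLy X Y Om hOm W ((-t) • G)] at h
      have hsm1 : Om ⊙ (((-t) • G) * X) = (-t) • (Om ⊙ (G * X)) := by
        rw [Matrix.smul_mul, Matrix.hadamard_smul]
      have hsm2 : Ly * ((-t) • G) + ((-t) • G) * Lx = (-t) • (Ly * G + G * Lx) := by
        rw [Matrix.mul_smul, Matrix.smul_mul, smul_add]
      rw [hsm1, hsm2, frobSq_smul, frobSq_smul, ip_smul_right] at h
      have ht2 : (-t) ^ 2 = t * t := by ring
      nlinarith [h]
    have hC : 0 ≤ (1 / 2) * frobSq (Om ⊙ (G * X)) + (lam / 2) * frobSq (Ly * G + G * Lx) := by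
      have := frobSq_nonneg (Om ⊙ (G * X))
      have := frobSq_nonneg (Ly * G + G * Lx)
      positivity
    set C := (1 / 2) * frobSq (Om ⊙ (G * X)) + (lam / 2) * frobSq (Ly * G + G * Lx) with hCdef
    have hGG : ip G G ≤ 0 := by
      by_contra hpos
      push_neg at hpos
      have ht : 0 < ip G G / (2 * (C + 1)) := by positivity
      have h2 := key _ ht
      have hC1 : (0:ℝ) < 2 * (C + 1) := by linarith
      rw [div_mul_eq_mul_div, le_div_iff₀ hC1] at h2
      nlinarith [mul_nonneg hpos.le hC]
    have hG0 : G = 0 := eq_zero_of_frobSq_nonpos G (by rw [frobSq_eq_ip]; exact hGG)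
    have hsub : opA lam Lx Ly X Om W - (Om ⊙ Y) * Xᵀ = 0 := hG0
    exact sub_eq_zero.mp hsub
  · intro heq W'
    have hG0 : G = 0 := by rw [hG, heq]; simp
    have h := J_expand lam Lx hLx Ly hLy X Y Om hOm W (W' - W)
    rw [show W + (W' - W) = W' by abel] at h
    rw [h, ← hG, hG0, ip_zero_left]
    have h1 := frobSq_nonneg (Om ⊙ ((W' - W) * X))
    have h2 := frobSq_nonneg (Ly * (W' - W) + (W' - W) * Lx)
    nlinarith
end

section
/- Let v be a real n_X-vector with ‖v‖₂ = 1 and u any real n_Y-vector. Then trace((u vᵀ)ᵀ 𝒜(u vᵀ)) = uᵀ Â u, where Â is the n_Y×n_Y matrix Â = λ((vᵀ L_x² v) I_{n_Y} + 2 (vᵀ L_x v) L_y + L_y²) + Σ_{α=1}^{n_inj} (vᵀ X_α X_αᵀ v) diag(Ω_α). -/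
open Matrix

lemma trace_vecMulVec_mul {m n : Type*} [Fintype m] [Fintype n]
    (a : m → ℝ) (b : n → ℝ) (M : Matrix n m ℝ) :
    Matrix.trace (vecMulVec a b * M) = b ⬝ᵥ M.mulVec a := by
  simp only [Matrix.trace, Matrix.diag, mul_apply, vecMulVec_apply, dotProduct, mulVec,
    Finset.mul_sum]
  rw [Finset.sum_comm]
  exact Finset.sum_congr rfl fun j _ => Finset.sum_congr rfl fun i _ => by ring

lemma mulVec_vecMulVec' {m n : Type*} [Fintype m] [Fintype n]
    (a : m → ℝ) (b : n → ℝ) (x : n → ℝ) :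
    (vecMulVec a b).mulVec x = (b ⬝ᵥ x) • a := by
  ext i
  simp only [mulVec, vecMulVec_apply, dotProduct, Pi.smul_apply, smul_eq_mul,
    Finset.sum_mul, Finset.mul_sum]
  exact Finset.sum_congr rfl fun j _ => by ring

lemma transpose_vecMulVec' {m n : Type*} (a : m → ℝ) (b : n → ℝ) :
    (vecMulVec a b)ᵀ = vecMulVec b a := by
  ext i j; simp [vecMulVec_apply, mul_comm]

lemma sum_mulVec' {m n ι : Type*} [Fintype n] (s : Finset ι)
    (M : ι → Matrix m n ℝ) (x : n → ℝ) :
    (∑ a ∈ s, M a).mulVec x = ∑ a ∈ s, (M a).mulVec x := by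
  induction s using Finset.cons_induction with
  | empty => simp
  | cons a s h ih => simp [Finset.sum_cons, Matrix.add_mulVec, ih]

lemma dotProduct_sum' {n ι : Type*} [Fintype n] (s : Finset ι)
    (u : n → ℝ) (f : ι → n → ℝ) :
    u ⬝ᵥ (∑ a ∈ s, f a) = ∑ a ∈ s, u ⬝ᵥ f a := by
  simp only [dotProduct, Finset.sum_apply, Finset.mul_sum]
  rw [Finset.sum_comm]

/-- For `‖v‖₂ = 1`, `trace((u vᵀ)ᵀ 𝒜(u vᵀ)) = uᵀ Â u` where
`Â = λ((vᵀL_x²v) I + 2(vᵀL_x v) L_y + L_y²) + Σ_α (vᵀX_αX_αᵀv) diag(Ω_α)`. -/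
theorem rank_one_quadratic_form_u {nY nX ninj : ℕ} (lam : ℝ)
    (Lx : Matrix (Fin nX) (Fin nX) ℝ) (Ly : Matrix (Fin nY) (Fin nY) ℝ)
    (X : Matrix (Fin nX) (Fin ninj) ℝ) (Om : Matrix (Fin nY) (Fin ninj) ℝ)
    (v : Fin nX → ℝ) (hv : ‖(EuclideanSpace.equiv (Fin nX) ℝ).symm v‖ = 1)
    (u : Fin nY → ℝ) :
    Matrix.trace ((Matrix.vecMulVec u v)ᵀ *
        opA lam Lx Ly X Om (Matrix.vecMulVec u v)) =
      u ⬝ᵥ (lam • ((v ⬝ᵥ (Lx ^ 2).mulVec v) • (1 : Matrix (Fin nY) (Fin nY) ℝ) +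
            (2 * (v ⬝ᵥ Lx.mulVec v)) • Ly + Ly ^ 2) +
          ∑ α : Fin ninj,
            (v ⬝ᵥ (Matrix.vecMulVec (fun k => X k α) (fun k => X k α)).mulVec v) •
              Matrix.diagonal (fun i => Om i α)).mulVec u := by
  have hvv : v ⬝ᵥ v = 1 := by
    have h := EuclideanSpace.norm_eq ((EuclideanSpace.equiv (Fin nX) ℝ).symm v)
    rw [hv] at h
    have h2 : ∑ i, v i ^ 2 = 1 := by
      have := congrArg (· ^ 2) h.symm
      simpa [Real.sq_sqrt (Finset.sum_nonneg fun i _ => sq_nonneg (v i))] using this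
    simpa [dotProduct, sq] using h2
  rw [transpose_vecMulVec', trace_vecMulVec_mul]
  simp only [opA, add_mulVec, smul_mulVec, ← mulVec_mulVec, mulVec_vecMulVec',
    one_mulVec, sum_mulVec', hvv, one_smul, mulVec_smul, dotProduct_add,
    dotProduct_smul, smul_eq_mul, dotProduct_sum', smul_smul]
end

section
/- Assume L_x and L_y are symmetric and that 𝒜 is positive definite, i.e., trace(Wᵀ 𝒜(W)) > 0 for every nonzero real n_Y×n_X matrix W. Let v be a real n_X-vector with ‖v‖₂ = 1, let R be a real n_Y×n_X matrix, and let Â = λ((vᵀ L_x² v) I_{n_Y} + 2 (vᵀ L_x v) L_y + L_y²) + Σ_{α=1}^{n_inj} (vᵀ X_α X_αᵀ v) diag(Ω_α). Then a vector û ∈ ℝ^{n_Y} minimizes the functional f(u) = trace((u vᵀ)ᵀ 𝒜(u vᵀ)) − 2 uᵀ R v if and only if Â û = R v, and this minimizer is unique. -/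
open Matrix

/-- Key trace identity: `trace((uvᵀ)ᵀ (P (uvᵀ) Q)) = (uᵀPu)(vᵀQᵀv)`. -/
theorem ALS_trace_quad {nY nX : ℕ} (u : Fin nY → ℝ) (v : Fin nX → ℝ)
    (P : Matrix (Fin nY) (Fin nY) ℝ) (Q : Matrix (Fin nX) (Fin nX) ℝ) :
    Matrix.trace ((Matrix.vecMulVec u v)ᵀ * (P * Matrix.vecMulVec u v * Q)) =
      (u ⬝ᵥ P.mulVec u) * (v ⬝ᵥ Qᵀ.mulVec v) := by
  simp only [Matrix.trace, Matrix.diag, Matrix.mul_apply, Matrix.transpose_apply,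
    Matrix.vecMulVec_apply, dotProduct, Matrix.mulVec, Finset.sum_mul, Finset.mul_sum]
  refine Finset.sum_congr rfl fun x _ => ?_
  rw [Finset.sum_comm]
  exact Finset.sum_congr rfl fun a _ => Finset.sum_congr rfl fun b _ =>
    Finset.sum_congr rfl fun c _ => by ring

theorem ALS_trace_opA {nY nX ninj : ℕ} (lam : ℝ)
    (Lx : Matrix (Fin nX) (Fin nX) ℝ) (hLx : Lxᵀ = Lx)
    (Ly : Matrix (Fin nY) (Fin nY) ℝ)
    (X : Matrix (Fin nX) (Fin ninj) ℝ) (Om : Matrix (Fin nY) (Fin ninj) ℝ)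
    (v : Fin nX → ℝ) (hvv : v ⬝ᵥ v = 1) (u : Fin nY → ℝ) :
    Matrix.trace ((Matrix.vecMulVec u v)ᵀ *
        opA lam Lx Ly X Om (Matrix.vecMulVec u v)) =
      lam * ((v ⬝ᵥ (Lx ^ 2).mulVec v) * (u ⬝ᵥ u) +
          2 * (v ⬝ᵥ Lx.mulVec v) * (u ⬝ᵥ Ly.mulVec u) + u ⬝ᵥ (Ly ^ 2).mulVec u) +
        ∑ α : Fin ninj,
          (v ⬝ᵥ (Matrix.vecMulVec (fun k => X k α) (fun k => X k α)).mulVec v) *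
            (u ⬝ᵥ (Matrix.diagonal (fun i => Om i α)).mulVec u) := by
  set W := Matrix.vecMulVec u v with hW
  have hLx2 : (Lx ^ 2)ᵀ = Lx ^ 2 := by rw [Matrix.transpose_pow, hLx]
  have e1 : Matrix.trace (Wᵀ * (W * Lx ^ 2)) = (v ⬝ᵥ (Lx ^ 2).mulVec v) * (u ⬝ᵥ u) := by
    have := ALS_trace_quad u v 1 (Lx ^ 2)
    rw [Matrix.one_mul, hLx2] at this
    rw [this, Matrix.one_mulVec]
    ring
  have e2 : Matrix.trace (Wᵀ * (Ly * W * Lx)) =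
      (u ⬝ᵥ Ly.mulVec u) * (v ⬝ᵥ Lx.mulVec v) := by
    have := ALS_trace_quad u v Ly Lx
    rwa [hLx] at this
  have e3 : Matrix.trace (Wᵀ * (Ly ^ 2 * W)) = u ⬝ᵥ (Ly ^ 2).mulVec u := by
    have := ALS_trace_quad u v (Ly ^ 2) 1
    rw [Matrix.mul_one, Matrix.transpose_one, Matrix.one_mulVec, hvv] at this
    rw [this, mul_one]
  have e4 : ∀ α : Fin ninj, Matrix.trace (Wᵀ *
      (Matrix.diagonal (fun i => Om i α) * W *
        Matrix.vecMulVec (fun k => X k α) (fun k => X k α))) =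
      (v ⬝ᵥ (Matrix.vecMulVec (fun k => X k α) (fun k => X k α)).mulVec v) *
        (u ⬝ᵥ (Matrix.diagonal (fun i => Om i α)).mulVec u) := by
    intro α
    have := ALS_trace_quad u v (Matrix.diagonal (fun i => Om i α))
      (Matrix.vecMulVec (fun k => X k α) (fun k => X k α))
    have ht : (Matrix.vecMulVec (fun k => X k α) (fun k => X k α))ᵀ =
        Matrix.vecMulVec (fun k => X k α) (fun k => X k α) := by
      ext i j; simp [Matrix.vecMulVec_apply, mul_comm]
    rw [ht] at this
    rw [this]; ring
  rw [opA]
  rw [Matrix.mul_add, Matrix.trace_add, Matrix.mul_smul, Matrix.trace_smul,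
    Matrix.mul_add, Matrix.mul_add, Matrix.trace_add, Matrix.trace_add,
    Matrix.mul_smul, Matrix.trace_smul, Matrix.mul_sum, Matrix.trace_sum]
  rw [e1, e2, e3]
  rw [Finset.sum_congr rfl fun α _ => e4 α]
  simp only [smul_eq_mul]
  ring

theorem ALS_vv_one {nX : ℕ} (v : Fin nX → ℝ)
    (hv : ‖(EuclideanSpace.equiv (Fin nX) ℝ).symm v‖ = 1) : v ⬝ᵥ v = 1 := by
  have h := hv
  rw [EuclideanSpace.norm_eq] at h
  have h2 : (∑ i, ‖v i‖ ^ 2) = 1 := by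
    simpa using Real.sqrt_eq_one.mp (by simpa using h)
  simpa [dotProduct, sq, Real.norm_eq_abs, abs_mul_abs_self] using h2

theorem ALS_sum_mulVec {n ninj : ℕ} (M : Fin ninj → Matrix (Fin n) (Fin n) ℝ)
    (u : Fin n → ℝ) : (∑ α, M α).mulVec u = ∑ α, (M α).mulVec u := by
  ext i
  simp [Matrix.mulVec, dotProduct, Matrix.sum_apply, Finset.sum_mul]
  rw [Finset.sum_comm]

theorem ALS_dot_sum {n ninj : ℕ} (w : Fin ninj → (Fin n → ℝ)) (u : Fin n → ℝ) :
    u ⬝ᵥ (∑ α, w α) = ∑ α, u ⬝ᵥ w α := by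
  simp [dotProduct, Finset.mul_sum]
  rw [Finset.sum_comm]

theorem ALS_quad_min {n : ℕ} (A : Matrix (Fin n) (Fin n) ℝ) (hsym : Aᵀ = A)
    (hpd : ∀ u : Fin n → ℝ, u ≠ 0 → 0 < u ⬝ᵥ A.mulVec u) (b : Fin n → ℝ)
    (g : (Fin n → ℝ) → ℝ) (hg : ∀ u, g u = u ⬝ᵥ A.mulVec u - 2 * (u ⬝ᵥ b))
    (uhat : Fin n → ℝ) :
    ((∀ u, g uhat ≤ g u) ↔ A.mulVec uhat = b) ∧ (∃! u₀, ∀ u, g u₀ ≤ g u) := by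
  have key : ∀ w d : Fin n → ℝ, A.mulVec w = b →
      g (w + d) = g w + d ⬝ᵥ A.mulVec d := by
    intro w d hw
    have h1 : w ⬝ᵥ A.mulVec d = d ⬝ᵥ b := by
      rw [Matrix.dotProduct_mulVec, ← Matrix.mulVec_transpose, hsym, hw, dotProduct_comm]
    have h2 : d ⬝ᵥ A.mulVec w = d ⬝ᵥ b := by rw [hw]
    simp only [hg, Matrix.mulVec_add, dotProduct_add, add_dotProduct, h1, h2]
    ring
  have hinj : Function.Injective A.mulVec := by
    intro x y hxy
    by_contra hne
    have hd : x - y ≠ 0 := sub_ne_zero.mpr hne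
    have hz : A.mulVec (x - y) = 0 := by
      rw [Matrix.mulVec_sub, hxy, sub_self]
    have h2 := hpd (x - y) hd
    rw [hz] at h2; simp [dotProduct] at h2
  have hsurj : Function.Surjective A.mulVecLin := by
    rw [← LinearMap.injective_iff_surjective]
    simpa [Function.Injective] using hinj
  obtain ⟨u₀, hu₀⟩ := hsurj b
  rw [Matrix.mulVecLin_apply] at hu₀
  have hmin_of_sol : ∀ w, A.mulVec w = b → ∀ u, g w ≤ g u := by
    intro w hw u
    have := key w (u - w) hw
    rw [add_sub_cancel] at this
    rw [this]
    rcases eq_or_ne (u - w) 0 with h | h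
    · simp [h]
    · linarith [hpd _ h]
  have hsol_of_min : ∀ w, (∀ u, g w ≤ g u) → w = u₀ := by
    intro w hw
    have h1 := key u₀ (w - u₀) hu₀
    rw [add_sub_cancel] at h1
    have h2 : (w - u₀) ⬝ᵥ A.mulVec (w - u₀) ≤ 0 := by
      have := hw u₀; linarith
    rcases eq_or_ne (w - u₀) 0 with h | h
    · exact sub_eq_zero.mp h
    · exact absurd h2 (not_le.mpr (hpd _ h))
  constructor
  · constructor
    · intro h; rw [hsol_of_min uhat h]; exact hu₀
    · intro h; exact hmin_of_sol uhat h
  · exact ⟨u₀, hmin_of_sol u₀ hu₀, fun y hy => hsol_of_min y hy⟩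

/-- With `L_x, L_y` symmetric, `𝒜` positive definite and `‖v‖₂ = 1`, a vector `û`
minimizes `f(u) = trace((u vᵀ)ᵀ 𝒜(u vᵀ)) − 2 uᵀ R v` iff `Â û = R v`, where
`Â = λ((vᵀL_x²v) I + 2(vᵀL_x v) L_y + L_y²) + Σ_α (vᵀX_αX_αᵀv) diag(Ω_α)`;
moreover the minimizer is unique. -/
theorem ALS_half_step_minimizer {nY nX ninj : ℕ} (lam : ℝ)
    (Lx : Matrix (Fin nX) (Fin nX) ℝ) (hLx : Lxᵀ = Lx)
    (Ly : Matrix (Fin nY) (Fin nY) ℝ) (hLy : Lyᵀ = Ly)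
    (X : Matrix (Fin nX) (Fin ninj) ℝ) (Om : Matrix (Fin nY) (Fin ninj) ℝ)
    (hpd : ∀ W : Matrix (Fin nY) (Fin nX) ℝ, W ≠ 0 →
      0 < Matrix.trace (Wᵀ * opA lam Lx Ly X Om W))
    (v : Fin nX → ℝ) (hv : ‖(EuclideanSpace.equiv (Fin nX) ℝ).symm v‖ = 1)
    (R : Matrix (Fin nY) (Fin nX) ℝ)
    (Ahat : Matrix (Fin nY) (Fin nY) ℝ)
    (hAhat : Ahat =
      lam • ((v ⬝ᵥ (Lx ^ 2).mulVec v) • (1 : Matrix (Fin nY) (Fin nY) ℝ) +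
          (2 * (v ⬝ᵥ Lx.mulVec v)) • Ly + Ly ^ 2) +
        ∑ α : Fin ninj,
          (v ⬝ᵥ (Matrix.vecMulVec (fun k => X k α) (fun k => X k α)).mulVec v) •
            Matrix.diagonal (fun i => Om i α))
    (f : (Fin nY → ℝ) → ℝ)
    (hf : f = fun u =>
      Matrix.trace ((Matrix.vecMulVec u v)ᵀ *
        opA lam Lx Ly X Om (Matrix.vecMulVec u v)) - 2 * (u ⬝ᵥ R.mulVec v))
    (uhat : Fin nY → ℝ) :
    ((∀ u : Fin nY → ℝ, f uhat ≤ f u) ↔ Ahat.mulVec uhat = R.mulVec v) ∧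
      (∃! u₀ : Fin nY → ℝ, ∀ u : Fin nY → ℝ, f u₀ ≤ f u) := by
  have hvv : v ⬝ᵥ v = 1 := ALS_vv_one v hv
  have hvne : v ≠ 0 := by
    intro h; rw [h] at hvv; simp [dotProduct] at hvv
  -- quadratic form of Ahat
  have hquad : ∀ u : Fin nY → ℝ, u ⬝ᵥ Ahat.mulVec u =
      lam * ((v ⬝ᵥ (Lx ^ 2).mulVec v) * (u ⬝ᵥ u) +
          2 * (v ⬝ᵥ Lx.mulVec v) * (u ⬝ᵥ Ly.mulVec u) + u ⬝ᵥ (Ly ^ 2).mulVec u) +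
        ∑ α : Fin ninj,
          (v ⬝ᵥ (Matrix.vecMulVec (fun k => X k α) (fun k => X k α)).mulVec v) *
            (u ⬝ᵥ (Matrix.diagonal (fun i => Om i α)).mulVec u) := by
    intro u
    rw [hAhat]
    simp only [Matrix.add_mulVec, Matrix.smul_mulVec, Matrix.one_mulVec,
      dotProduct_add, dotProduct_smul, smul_eq_mul, ALS_sum_mulVec, ALS_dot_sum]
    try ring
  have htr : ∀ u : Fin nY → ℝ,
      Matrix.trace ((Matrix.vecMulVec u v)ᵀ *
        opA lam Lx Ly X Om (Matrix.vecMulVec u v)) = u ⬝ᵥ Ahat.mulVec u := by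
    intro u
    rw [ALS_trace_opA lam Lx hLx Ly X Om v hvv u, hquad u]
  -- Ahat is symmetric
  have hsymA : Ahatᵀ = Ahat := by
    rw [hAhat]
    simp [Matrix.transpose_add, Matrix.transpose_smul, Matrix.transpose_one,
      Matrix.transpose_pow, Matrix.diagonal_transpose, hLy, Matrix.transpose_sum]
  -- Ahat is positive definite
  have hpdA : ∀ u : Fin nY → ℝ, u ≠ 0 → 0 < u ⬝ᵥ Ahat.mulVec u := by
    intro u hu
    have hWne : Matrix.vecMulVec u v ≠ 0 := by
      obtain ⟨i, hi⟩ := Function.ne_iff.mp hu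
      obtain ⟨j, hj⟩ := Function.ne_iff.mp hvne
      intro h
      have := congrFun (congrFun h i) j
      simp [Matrix.vecMulVec_apply] at this
      rcases this with h' | h'
      · exact hi h'
      · exact hj h'
    have := hpd _ hWne
    rwa [htr u] at this
  have hgf : ∀ u, f u = u ⬝ᵥ Ahat.mulVec u - 2 * (u ⬝ᵥ R.mulVec v) := by
    intro u
    rw [hf]
    simp only
    rw [htr u]
  exact ALS_quad_min Ahat hsymA hpdA (R.mulVec v) f hgf uhat
end
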